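/- Trace-distance bound between the post-selected average state and the channel-averaged state: with notation as in the non-IID protocol, suppose |R − t̄|/R ≤ δ where δ = 1/(K+1) + √(2x/(R(K+1))), R = (K+1)/(N+1), t̄ = t(Ē|Φ_i) = (1/(N+1))Σ_k t_k, Φ̄_t = (Σ_k T_k Φ_k)/(K+1) and Φ̄_o = (Σ_k t_k Φ_k)/((N+1)·t̄), where Φ_k are density operators and T_k ∈ {0,1} with Σ_k T_k = K+1. If additionally the martingale deviation bound |Σ_k (T_k − t_k)Tr(PΦ_k)| ≤ (N+1)Rδ holds for the optimal projector P, then D(Φ̄_t, Φ̄_o) ≤ 2δ/(1−δ). -/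

import Mathlib

open Matrix Kronecker MeasureTheory ComplexOrder

noncomputable section

def msqrt {α : Type*} [Fintype α] [DecidableEq α] (A : Matrix α α ℂ) : Matrix α α ℂ :=
  open scoped Classical in
  if h : A.PosSemidef then (h.1.eigenvectorUnitary : Matrix α α ℂ) *
    diagonal ((↑) ∘ Real.sqrt ∘ h.1.eigenvalues) * (star h.1.eigenvectorUnitary : Matrix α α ℂ) else 0

def fid {α : Type*} [Fintype α] [DecidableEq α] (ρ σ : Matrix α α ℂ) : ℝ :=
  ((msqrt (msqrt ρ * σ * msqrt ρ)).trace).re ^ 2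

def sineDist {α : Type*} [Fintype α] [DecidableEq α] (ρ σ : Matrix α α ℂ) : ℝ :=
  Real.sqrt (1 - fid ρ σ)

def traceDist {α : Type*} [Fintype α] [DecidableEq α] (ρ σ : Matrix α α ℂ) : ℝ :=
  (1/2) * ((msqrt ((ρ - σ)ᴴ * (ρ - σ))).trace).re

def IsDensity {α : Type*} [Fintype α] (ρ : Matrix α α ℂ) : Prop :=
  ρ.PosSemidef ∧ ρ.trace = 1

def IsPureState {α : Type*} [Fintype α] (ρ : Matrix α α ℂ) : Prop :=
  IsDensity ρ ∧ ∃ ψ : α → ℂ, ρ = Matrix.vecMulVec ψ (star ψ)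

def tr' {α : Type*} [Fintype α] (A : Matrix α α ℂ) : ℝ := A.trace.re

def nstate {α : Type*} [Fintype α] (ρ : Matrix α α ℂ) : Matrix α α ℂ :=
  (((tr' ρ : ℝ) : ℂ))⁻¹ • ρ

def IsCPTD {α β : Type*} [Fintype α] [Fintype β] [DecidableEq α] [DecidableEq β]
    (E : Matrix α α ℂ →ₗ[ℂ] Matrix β β ℂ) : Prop :=
  ∃ (k : ℕ) (K : Fin k → Matrix β α ℂ),
    (∀ ρ, E ρ = ∑ i, K i * ρ * (K i)ᴴ) ∧ (1 - ∑ i, (K i)ᴴ * K i).PosSemidef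

def IsCPTP {α β : Type*} [Fintype α] [Fintype β] [DecidableEq α] [DecidableEq β]
    (E : Matrix α α ℂ →ₗ[ℂ] Matrix β β ℂ) : Prop :=
  ∃ (k : ℕ) (K : Fin k → Matrix β α ℂ),
    (∀ ρ, E ρ = ∑ i, K i * ρ * (K i)ᴴ) ∧ (∑ i, (K i)ᴴ * K i = 1)

def tensId {α β γ : Type*} [Fintype α]
    (E : Matrix α α ℂ → Matrix β β ℂ)
    (ρ : Matrix (α × γ) (α × γ) ℂ) : Matrix (β × γ) (β × γ) ℂ :=
  Matrix.of fun p q => E (Matrix.of fun a b => ρ (a, p.2) (b, q.2)) p.1 q.1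

def maxEnt (d : ℕ) : Matrix (Fin d × Fin d) (Fin d × Fin d) ℂ :=
  Matrix.of fun p q => if p.1 = p.2 ∧ q.1 = q.2 then ((d : ℂ))⁻¹ else 0

def ptraceSnd {α β : Type*} [Fintype β] (ρ : Matrix (α × β) (α × β) ℂ) : Matrix α α ℂ :=
  Matrix.of fun a b => ∑ j, ρ (a, j) (b, j)

def ptraceFst {α β : Type*} [Fintype α] (ρ : Matrix (α × β) (α × β) ℂ) : Matrix β β ℂ :=
  Matrix.of fun i j => ∑ a, ρ (a, i) (a, j)

def choiSine {m n : ℕ} (E₁ E₂ : Matrix (Fin m) (Fin m) ℂ →ₗ[ℂ] Matrix (Fin n) (Fin n) ℂ) : ℝ :=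
  sineDist (nstate (tensId (⇑E₁) (maxEnt m))) (nstate (tensId (⇑E₂) (maxEnt m)))

def diamondSine {m n : ℕ} (E₁ E₂ : Matrix (Fin m) (Fin m) ℂ →ₗ[ℂ] Matrix (Fin n) (Fin n) ℂ) : ℝ :=
  sSup { x | ∃ ρ : Matrix (Fin m × Fin m) (Fin m × Fin m) ℂ, IsPureState ρ ∧
    tr' (tensId (⇑E₁) ρ) ≠ 0 ∧ tr' (tensId (⇑E₂) ρ) ≠ 0 ∧
    x = sineDist (nstate (tensId (⇑E₁) ρ)) (nstate (tensId (⇑E₂) ρ)) }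


section AuxLemmas
open Matrix ComplexOrder
variable {m : Type*} [Fintype m] [DecidableEq m]
open scoped MatrixOrder

lemma psd_diag_re_nonneg {A : Matrix m m ℂ} (hA : A.PosSemidef) (i : m) : 0 ≤ (A i i).re := by
  have h : 0 ≤ A i i := hA.diag_nonneg
  exact (Complex.le_def.mp h).1

lemma psd_trace_re_nonneg {A : Matrix m m ℂ} (hA : A.PosSemidef) : 0 ≤ A.trace.re := by
  rw [Matrix.trace, Complex.re_sum]
  exact Finset.sum_nonneg fun i _ => psd_diag_re_nonneg hA i

lemma trace_mul_psd_re_nonneg {A B : Matrix m m ℂ} (hA : A.PosSemidef) (hB : B.PosSemidef) :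
    0 ≤ ((A * B).trace).re := by
  have h1 : A * B = CFC.sqrt A * CFC.sqrt A * B := by rw [CFC.sqrt_mul_sqrt_self A hA.nonneg]
  have h2 : ((CFC.sqrt A * CFC.sqrt A * B)).trace = (CFC.sqrt A * B * CFC.sqrt A).trace :=
    (Matrix.trace_mul_cycle (CFC.sqrt A) B (CFC.sqrt A)).symm
  have h3 : (CFC.sqrt A * B * CFC.sqrt A).PosSemidef := by
    have := hB.conjTranspose_mul_mul_same (CFC.sqrt A)
    rwa [(CFC.sqrt_nonneg A).posSemidef.1] at this
  rw [h1, h2]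
  exact psd_trace_re_nonneg h3

lemma exists_opt_proj (Δ : Matrix m m ℂ) (hΔ : Δ.IsHermitian) (htr : Δ.trace = 0) :
    ∃ P : Matrix m m ℂ, Pᴴ = P ∧ P * P = P ∧ P.PosSemidef ∧ (1 - P).PosSemidef ∧
      ((msqrt (Δᴴ * Δ)).trace).re = 2 * ((P * Δ).trace).re := by
  classical
  set U : Matrix m m ℂ := (hΔ.eigenvectorUnitary : Matrix m m ℂ) with hUdef
  set ev : m → ℝ := hΔ.eigenvalues with hevdef
  have hU1 : star U * U = 1 := Matrix.mem_unitaryGroup_iff'.mp hΔ.eigenvectorUnitary.2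
  have hU2 : U * star U = 1 := Matrix.mem_unitaryGroup_iff.mp hΔ.eigenvectorUnitary.2
  have conj : ∀ e f : m → ℂ,
      (U * diagonal e * star U) * (U * diagonal f * star U)
        = U * diagonal (fun i => e i * f i) * star U := by
    intro e f
    simp only [Matrix.mul_assoc]
    rw [← Matrix.mul_assoc (star U) U, hU1, Matrix.one_mul,
      ← Matrix.mul_assoc (diagonal e) (diagonal f), Matrix.diagonal_mul_diagonal]
  have htrUMU : ∀ M : Matrix m m ℂ, (U * M * star U).trace = M.trace := by
    intro M
    rw [Matrix.trace_mul_cycle, hU1, Matrix.one_mul]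
  have hspec : Δ = U * diagonal (fun i => ((ev i : ℝ) : ℂ)) * star U := by
    have := hΔ.spectral_theorem
    rw [Unitary.conjStarAlgAut_apply] at this
    exact this
  set d : m → ℂ := fun i => if 0 ≤ ev i then 1 else 0 with hd
  set P : Matrix m m ℂ := U * diagonal d * star U with hPdef
  have hds : star d = d := funext fun i => by
    simp only [hd, Pi.star_apply]; split <;> simp
  have hPH : Pᴴ = P := by
    rw [hPdef, Matrix.conjTranspose_mul, Matrix.conjTranspose_mul,
      Matrix.diagonal_conjTranspose, hds, Matrix.star_eq_conjTranspose U,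
      Matrix.conjTranspose_conjTranspose, Matrix.mul_assoc]
  have hPP : P * P = P := by
    have hdd : (fun i => d i * d i) = d := funext fun i => by
      simp only [hd]; split <;> simp
    rw [hPdef, conj, hdd]
  have hdnn : ∀ i, (0:ℂ) ≤ d i := fun i => by
    simp only [hd]; split <;> simp
  have hPpsd : P.PosSemidef := by
    have h := (Matrix.PosSemidef.diagonal hdnn).mul_mul_conjTranspose_same U
    rwa [← Matrix.star_eq_conjTranspose] at h
  have h1sub : (1 : Matrix m m ℂ) - P = U * diagonal (fun i => 1 - d i) * star U := by
    have h1 : (1 : Matrix m m ℂ) = U * diagonal (fun _ => (1:ℂ)) * star U := by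
      rw [show diagonal (fun _ : m => (1:ℂ)) = 1 from Matrix.diagonal_one, Matrix.mul_one, hU2]
    calc (1 : Matrix m m ℂ) - P
        = U * diagonal (fun _ => (1:ℂ)) * star U - U * diagonal d * star U := by
          rw [← h1, hPdef]
      _ = U * (diagonal (fun _ => (1:ℂ)) - diagonal d) * star U := by
          rw [Matrix.mul_sub, Matrix.sub_mul]
      _ = U * diagonal (fun i => 1 - d i) * star U := by rw [Matrix.diagonal_sub]
  have h1Ppsd : ((1 : Matrix m m ℂ) - P).PosSemidef := by
    rw [h1sub]
    have hnn : ∀ i, (0:ℂ) ≤ 1 - d i := fun i => by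
      simp only [hd]; split <;> simp
    have h := (Matrix.PosSemidef.diagonal hnn).mul_mul_conjTranspose_same U
    rwa [← Matrix.star_eq_conjTranspose] at h
  rw [hspec, htrUMU, Matrix.trace_diagonal] at htr
  have hevsum : ∑ i, ev i = 0 := by exact_mod_cast htr
  have hPΔ : ((P * Δ).trace).re = ∑ i, (if 0 ≤ ev i then ev i else 0) := by
    rw [hPdef]
    conv_lhs => rw [hspec]
    rw [conj, htrUMU, Matrix.trace_diagonal, Complex.re_sum]
    congr 1
    funext i
    simp only [hd]
    split <;> simp
  have hpsd : (Δᴴ * Δ).PosSemidef := Matrix.posSemidef_conjTranspose_mul_self Δ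
  set S : Matrix m m ℂ := U * diagonal (fun i => ((|ev i| : ℝ) : ℂ)) * star U with hSdef
  have hSpsd : S.PosSemidef := by
    have hnn : ∀ i, (0:ℂ) ≤ ((|ev i| : ℝ) : ℂ) := fun i => by
      rw [Complex.zero_le_real]; exact abs_nonneg _
    have h := (Matrix.PosSemidef.diagonal hnn).mul_mul_conjTranspose_same U
    rwa [← Matrix.star_eq_conjTranspose] at h
  have hS2 : S ^ 2 = Δᴴ * Δ := by
    rw [pow_two, hSdef, conj, hΔ.eq]
    conv_rhs => rw [hspec]
    rw [conj]
    have : (fun i => ((|ev i| : ℝ) : ℂ) * ((|ev i| : ℝ) : ℂ))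
        = fun i => ((ev i : ℝ) : ℂ) * ((ev i : ℝ) : ℂ) := funext fun i => by
      rw [← Complex.ofReal_mul, ← Complex.ofReal_mul, abs_mul_abs_self]
    rw [this]
  have hSsqrt : msqrt (Δᴴ * Δ) = S := by
    unfold msqrt
    rw [dif_pos hpsd]
    have hS2' : S * S = Δᴴ * Δ := by rw [← pow_two, hS2]
    calc _ = cfc Real.sqrt (Δᴴ * Δ) := by rw [hpsd.1.cfc_eq]; rfl
      _ = cfcₙ Real.sqrt (Δᴴ * Δ) := by rw [cfcₙ_eq_cfc (hf := Real.continuous_sqrt.continuousOn) (hf0 := Real.sqrt_zero)]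
      _ = CFC.sqrt (Δᴴ * Δ) := (CFC.sqrt_eq_real_sqrt _ hpsd.nonneg).symm
      _ = S := CFC.sqrt_unique hS2' hSpsd.nonneg
  refine ⟨P, hPH, hPP, hPpsd, h1Ppsd, ?_⟩
  rw [hSsqrt, hSdef, htrUMU, Matrix.trace_diagonal, Complex.re_sum, hPΔ]
  have habs : ∀ i : m, |ev i| = 2 * (if 0 ≤ ev i then ev i else 0) - ev i := by
    intro i
    by_cases h : 0 ≤ ev i
    · rw [if_pos h, abs_of_nonneg h]; ring
    · rw [if_neg h, abs_of_neg (lt_of_not_ge h)]; ring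
  calc (∑ i, (((|ev i| : ℝ) : ℂ)).re) = ∑ i, |ev i| := by simp
    _ = ∑ i, (2 * (if 0 ≤ ev i then ev i else 0) - ev i) :=
        Finset.sum_congr rfl fun i _ => habs i
    _ = 2 * (∑ i, (if 0 ≤ ev i then ev i else 0)) - ∑ i, ev i := by
        rw [Finset.sum_sub_distrib, Finset.mul_sum]
    _ = 2 * ∑ i, (if 0 ≤ ev i then ev i else 0) := by rw [hevsum]; ring

end AuxLemmas

set_option maxHeartbeats 2000000 in
/-- Trace-distance bound between the post-selected average state and the
channel-averaged state (key algebraic step of Proposition 2 of the paper). -/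
theorem postselected_average_state_bound {n N K : ℕ}
    (x R δ tbar : ℝ)
    (T t : Fin (N + 1) → ℝ)
    (hT01 : ∀ k, T k = 0 ∨ T k = 1) (hTsum : ∑ k, T k = K + 1)
    (ht : ∀ k, 0 ≤ t k ∧ t k ≤ 1)
    (hR : R = (K + 1) / (N + 1)) (htbar : tbar = (∑ k, t k) / (N + 1))
    (htpos : 0 < tbar)
    (hδ : δ = 1 / (K + 1) + Real.sqrt (2 * x / (R * (K + 1)))) (hδ1 : δ < 1)
    (hdev : |R - tbar| / R ≤ δ)
    (Φ : Fin (N + 1) → Matrix (Fin n) (Fin n) ℂ) (hΦ : ∀ k, IsDensity (Φ k))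
    (Φt Φo : Matrix (Fin n) (Fin n) ℂ)
    (hΦt : Φt = (((K + 1 : ℝ)) : ℂ)⁻¹ • ∑ k, ((T k : ℝ) : ℂ) • Φ k)
    (hΦo : Φo = ((((N + 1 : ℝ) * tbar)) : ℂ)⁻¹ • ∑ k, ((t k : ℝ) : ℂ) • Φ k)
    (hP : ∀ P : Matrix (Fin n) (Fin n) ℂ, Pᴴ = P → P * P = P →
      traceDist Φt Φo = ((P * (Φt - Φo)).trace).re →
      |∑ k, (T k - t k) * ((P * Φ k).trace).re| ≤ (N + 1) * R * δ) :
    traceDist Φt Φo ≤ 2 * δ / (1 - δ) := by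
  have hNp : (0:ℝ) < (N:ℝ) + 1 := by positivity
  have hKp : (0:ℝ) < (K:ℝ) + 1 := by positivity
  have hM : (0:ℝ) < ((N:ℝ) + 1) * tbar := mul_pos hNp htpos
  have hδ0 : 0 ≤ δ := by
    rw [hδ]
    positivity
  have hRpos : 0 < R := by rw [hR]; positivity
  have hsumt : ∑ k, t k = ((N:ℝ) + 1) * tbar := by
    rw [htbar]; field_simp
  have hΦH : ∀ k, (Φ k)ᴴ = Φ k := fun k => ((hΦ k).1).1
  have hΦtr : ∀ k, (Φ k).trace = 1 := fun k => (hΦ k).2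
  -- Hermiticity
  have hherm : (Φt - Φo).IsHermitian := by
    have h1 : Φtᴴ = Φt := by
      rw [hΦt, Matrix.conjTranspose_smul, Matrix.conjTranspose_sum]
      simp only [Matrix.conjTranspose_smul, hΦH, Complex.star_def, map_inv₀,
        _root_.map_mul, Complex.conj_ofReal]
    have h2 : Φoᴴ = Φo := by
      rw [hΦo, Matrix.conjTranspose_smul, Matrix.conjTranspose_sum]
      simp only [Matrix.conjTranspose_smul, hΦH, Complex.star_def, map_inv₀,
        _root_.map_mul, Complex.conj_ofReal]
    exact Matrix.IsHermitian.sub h1 h2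
  -- traces
  have htrT : (∑ k, ((T k : ℝ) : ℂ) • Φ k).trace = ((∑ k, T k : ℝ) : ℂ) := by
    rw [Matrix.trace_sum]
    push_cast
    exact Finset.sum_congr rfl fun k _ => by rw [Matrix.trace_smul, hΦtr, smul_eq_mul, mul_one]
  have htrt : (∑ k, ((t k : ℝ) : ℂ) • Φ k).trace = ((∑ k, t k : ℝ) : ℂ) := by
    rw [Matrix.trace_sum]
    push_cast
    exact Finset.sum_congr rfl fun k _ => by rw [Matrix.trace_smul, hΦtr, smul_eq_mul, mul_one]
  have htrΦt : Φt.trace = 1 := by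
    rw [hΦt, Matrix.trace_smul, htrT, hTsum, smul_eq_mul]
    push_cast
    exact inv_mul_cancel₀ (by exact_mod_cast hKp.ne')
  have htrΦo : Φo.trace = 1 := by
    rw [hΦo, Matrix.trace_smul, htrt, hsumt, smul_eq_mul, Complex.ofReal_mul]
    exact inv_mul_cancel₀ (by exact_mod_cast hM.ne')
  have htr0 : (Φt - Φo).trace = 0 := by
    rw [Matrix.trace_sub, htrΦt, htrΦo, sub_self]
  obtain ⟨P, hPH, hPP, hPpsd, h1Ppsd, hkey⟩ := exists_opt_proj _ hherm htr0
  have htd : traceDist Φt Φo = ((P * (Φt - Φo)).trace).re := by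
    unfold traceDist
    rw [hkey]; ring
  have hdevP := hP P hPH hPP htd
  set c : Fin (N+1) → ℝ := fun k => ((P * Φ k).trace).re with hc
  have hc0 : ∀ k, 0 ≤ c k := fun k => trace_mul_psd_re_nonneg hPpsd (hΦ k).1
  have hc1 : ∀ k, c k ≤ 1 := by
    intro k
    have h := trace_mul_psd_re_nonneg h1Ppsd (hΦ k).1
    rw [Matrix.sub_mul, Matrix.one_mul, Matrix.trace_sub] at h
    have he : ((Φ k).trace - (P * Φ k).trace).re = 1 - c k := by
      rw [Complex.sub_re, hΦtr]; norm_num; rfl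
    rw [he] at h
    linarith
  -- expand traceDist
  have hPt : ((P * Φt).trace).re = ((K:ℝ) + 1)⁻¹ * ∑ k, T k * c k := by
    rw [hΦt, Matrix.mul_smul, Matrix.mul_sum]
    simp only [_root_.mul_smul_comm]
    rw [Matrix.trace_smul, Matrix.trace_sum]
    simp only [Matrix.trace_smul, smul_eq_mul, ← Complex.ofReal_inv]
    rw [Complex.re_ofReal_mul, Complex.re_sum]
    congr 1
    exact Finset.sum_congr rfl fun k _ => by rw [Complex.re_ofReal_mul]
  have hPo : ((P * Φo).trace).re = (((N:ℝ) + 1) * tbar)⁻¹ * ∑ k, t k * c k := by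
    rw [hΦo, Matrix.mul_smul, Matrix.mul_sum]
    simp only [_root_.mul_smul_comm]
    rw [Matrix.trace_smul, Matrix.trace_sum]
    simp only [Matrix.trace_smul, smul_eq_mul, ← Complex.ofReal_mul, ← Complex.ofReal_inv]
    rw [Complex.re_ofReal_mul, Complex.re_sum]
    congr 1
    exact Finset.sum_congr rfl fun k _ => by rw [Complex.re_ofReal_mul]
  have hTD : traceDist Φt Φo
      = ((K:ℝ) + 1)⁻¹ * ∑ k, T k * c k - (((N:ℝ) + 1) * tbar)⁻¹ * ∑ k, t k * c k := by
    rw [htd, Matrix.mul_sub, Matrix.trace_sub, Complex.sub_re, hPt, hPo]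
  -- arithmetic
  set A := ∑ k, (T k - t k) * c k with hA
  set S := ∑ k, t k * c k with hS
  have hsplit : ∑ k, T k * c k = A + S := by
    rw [hA, hS, ← Finset.sum_add_distrib]
    exact Finset.sum_congr rfl fun k _ => by ring
  have hNR : ((N:ℝ) + 1) * R = (K:ℝ) + 1 := by
    rw [hR]; field_simp
  have hAbound : |A| ≤ ((K:ℝ) + 1) * δ := by
    have := hdevP
    rw [← hNR]
    calc |A| ≤ ((N:ℝ)+1) * R * δ := this
      _ = ((N:ℝ)+1) * R * δ := rfl
  have hS0 : 0 ≤ S := Finset.sum_nonneg fun k _ => mul_nonneg (ht k).1 (hc0 k)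
  have hSM : S ≤ ((N:ℝ) + 1) * tbar := by
    rw [← hsumt]
    exact Finset.sum_le_sum fun k _ => by
      have := mul_le_mul_of_nonneg_left (hc1 k) (ht k).1
      simpa using this
  have hKM : |((K:ℝ) + 1) - ((N:ℝ) + 1) * tbar| ≤ δ * ((K:ℝ) + 1) := by
    have h1 : |R - tbar| ≤ δ * R := by
      rw [div_le_iff₀ hRpos] at hdev; linarith [hdev]
    have h2 : |((N:ℝ)+1) * (R - tbar)| ≤ ((N:ℝ)+1) * (δ * R) := by
      rw [abs_mul, abs_of_pos hNp]
      exact mul_le_mul_of_nonneg_left h1 hNp.le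
    have h3 : ((N:ℝ)+1) * (R - tbar) = ((K:ℝ) + 1) - ((N:ℝ) + 1) * tbar := by
      rw [mul_sub, hNR]
    rw [h3] at h2
    calc |((K:ℝ) + 1) - ((N:ℝ) + 1) * tbar| ≤ ((N:ℝ)+1) * (δ * R) := h2
      _ = δ * (((N:ℝ)+1) * R) := by ring
      _ = δ * ((K:ℝ) + 1) := by rw [hNR]
  set Kp := (K:ℝ) + 1
  set M := ((N:ℝ) + 1) * tbar
  have h2δ : Kp⁻¹ * (A + S) - M⁻¹ * S ≤ 2 * δ := by
    have t1 : Kp⁻¹ * A ≤ δ := by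
      have hA1 : A ≤ δ * Kp := by
        have := (abs_le.mp hAbound).2; linarith
      rw [← div_eq_inv_mul, div_le_iff₀ hKp]
      linarith
    have t2 : Kp⁻¹ * S - M⁻¹ * S ≤ δ := by
      have e : Kp⁻¹ * S - M⁻¹ * S = S * (M - Kp) / (Kp * M) := by
        field_simp
      rw [e, div_le_iff₀ (mul_pos hKp hM)]
      have hd1 : Kp - M ≤ δ * Kp := (abs_le.mp hKM).2
      have hd2 : M - Kp ≤ δ * Kp := by
        have := (abs_le.mp hKM).1; linarith
      rcases le_total M Kp with h | h
      · nlinarith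
      · nlinarith
    have : Kp⁻¹ * (A + S) - M⁻¹ * S = Kp⁻¹ * A + (Kp⁻¹ * S - M⁻¹ * S) := by ring
    rw [this]
    linarith
  have h1δ : 0 < 1 - δ := by linarith
  have hfin : 2 * δ ≤ 2 * δ / (1 - δ) := by
    rw [le_div_iff₀ h1δ]
    nlinarith
  rw [hTD, hsplit]
  exact le_trans h2δ hfin
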